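/- Let σ ∈ S_n and let b ≥ 2 be an integer dividing n such that the size of every orbit of σ on {1,…,n} is divisible by b. Then σ is contained in a conjugate of the wreath product S_b ≀ S_{n/b}; equivalently, there is a partition of {1,…,n} into n/b blocks of size b whose blocks are permuted by σ. -/

import Mathlib

/-- The stabilizer `S_b ≀ S_{n/b}` in `Sₙ` of the partition of `{0,…,n-1}` into consecutive
blocks of size `b`. -/
def blockStab (n b : ℕ) : Subgroup (Equiv.Perm (Fin n)) where
  carrier := {ψ | ∀ a c : Fin n, (ψ a : ℕ) / b = (ψ c : ℕ) / b ↔ (a : ℕ) / b = (c : ℕ) / b}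
  one_mem' := by intro a c; simp
  mul_mem' := by
    intro ψ φ hψ hφ a c
    simp only [Equiv.Perm.mul_apply]
    exact (hψ _ _).trans (hφ _ _)
  inv_mem' := by
    intro ψ hψ a c
    simpa using (hψ (ψ⁻¹ a) (ψ⁻¹ c)).symm

/-- If `b ≥ 2` divides `n` and the size of every orbit of `σ ∈ Sₙ` is divisible by `b`,
then `σ` lies in a conjugate of `S_b ≀ S_{n/b}`. -/
theorem mem_conj_blockStab_of_dvd_orbits (n b : ℕ) (hb : 2 ≤ b) (hdvd : b ∣ n)
    (σ : Equiv.Perm (Fin n))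
    (horb : ∀ a : Fin n, b ∣ Nat.card {x : Fin n | ∃ k : ℤ, (σ ^ k) a = x}) :
    ∃ k : Equiv.Perm (Fin n), k * σ * k⁻¹ ∈ blockStab n b := by
  classical
  have hb0 : 0 < b := by omega
  -- the minimal period of σ at x
  set m : Fin n → ℕ := fun x => Function.minimalPeriod (σ • ·) x with hm
  have key : ∀ (x : Fin n) (k : ℤ), (σ ^ k) x = x ↔ (m x : ℤ) ∣ k := by
    intro x k
    exact MulAction.zpow_smul_eq_iff_minimalPeriod_dvd (a := σ) (b := x) (n := k)
  -- the orbit set equals the MulAction orbit of zpowers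
  have horbset : ∀ x : Fin n,
      {y : Fin n | ∃ k : ℤ, (σ ^ k) x = y} = MulAction.orbit (Subgroup.zpowers σ) x := by
    intro x
    ext y
    simp only [Set.mem_setOf_eq, MulAction.mem_orbit_iff]
    constructor
    · rintro ⟨k, hk⟩
      exact ⟨⟨σ ^ k, Subgroup.mem_zpowers_iff.2 ⟨k, rfl⟩⟩, hk⟩
    · rintro ⟨⟨g, hg⟩, hgy⟩
      obtain ⟨k, rfl⟩ := Subgroup.mem_zpowers_iff.1 hg
      exact ⟨k, hgy⟩
  have hcardorb : ∀ x : Fin n, m x = Nat.card (MulAction.orbit (Subgroup.zpowers σ) x) := by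
    intro x
    haveI : Fintype (MulAction.orbit (Subgroup.zpowers σ) x) := Fintype.ofFinite _
    rw [Nat.card_eq_fintype_card]
    exact MulAction.minimalPeriod_eq_card (a := σ) (b := x)
  have horbm : ∀ x : Fin n, b ∣ m x := by
    intro x
    rw [hcardorb x, ← horbset x]
    exact horb x
  have hmpos : ∀ x : Fin n, 0 < m x := by
    intro x
    rw [hcardorb x]
    have hx : x ∈ MulAction.orbit (Subgroup.zpowers σ) x := MulAction.mem_orbit_self x
    haveI : Nonempty (MulAction.orbit (Subgroup.zpowers σ) x) := ⟨⟨x, hx⟩⟩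
    exact Nat.card_pos
  -- t x : the number of blocks inside the orbit of x
  set t : Fin n → ℕ := fun x => m x / b with ht
  have hmt : ∀ x : Fin n, b * t x = m x := fun x => Nat.mul_div_cancel' (horbm x)
  have htpos : ∀ x : Fin n, 0 < t x :=
    fun x => Nat.div_pos (Nat.le_of_dvd (hmpos x) (horbm x)) hb0
  -- the minimal period is constant along orbits
  have hminv : ∀ (x : Fin n) (j : ℤ), m ((σ ^ j) x) = m x := by
    intro x j
    have hfix : ∀ k : ℤ, (σ ^ k) ((σ ^ j) x) = (σ ^ j) x ↔ (σ ^ k) x = x := by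
      intro k
      have hcomm : (σ ^ k) ((σ ^ j) x) = (σ ^ j) ((σ ^ k) x) := by
        rw [← Equiv.Perm.mul_apply, ← Equiv.Perm.mul_apply, ← zpow_add, ← zpow_add, add_comm]
      rw [hcomm]
      exact Equiv.apply_eq_iff_eq _
    have h1 : (m ((σ ^ j) x) : ℤ) ∣ (m x : ℤ) := by
      rw [← key ((σ ^ j) x) (m x), hfix]
      exact (key x (m x)).2 dvd_rfl
    have h2 : (m x : ℤ) ∣ (m ((σ ^ j) x) : ℤ) := by
      rw [← key x (m ((σ ^ j) x)), ← hfix]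
      exact (key ((σ ^ j) x) _).2 dvd_rfl
    have := Int.dvd_antisymm (Int.natCast_nonneg _) (Int.natCast_nonneg _) h1 h2
    exact_mod_cast this
  have htinv : ∀ (x : Fin n) (j : ℤ), t ((σ ^ j) x) = t x := by
    intro x j; simp only [ht]; rw [hminv]
  -- the block relation
  set r : Fin n → Fin n → Prop := fun x y => ∃ j : ℤ, (σ ^ (j * (t x : ℤ))) x = y with hr
  have hrrefl : ∀ x, r x x := fun x => ⟨0, by simp⟩
  have hrsymm : ∀ {x y}, r x y → r y x := by
    rintro x y ⟨j, rfl⟩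
    refine ⟨-j, ?_⟩
    rw [htinv]
    rw [← Equiv.Perm.mul_apply, ← zpow_add]
    simp
  have hrtrans : ∀ {x y z}, r x y → r y z → r x z := by
    rintro x y z ⟨j, rfl⟩ ⟨j', rfl⟩
    refine ⟨j + j', ?_⟩
    rw [htinv, ← Equiv.Perm.mul_apply, ← zpow_add]
    ring_nf
  -- σ-invariance of the relation
  have hrinv : ∀ x y, r (σ x) (σ y) ↔ r x y := by
    intro x y
    have htx : t (σ x) = t x := by
      have := htinv x 1; simpa using this
    constructor
    · rintro ⟨j, hj⟩
      refine ⟨j, ?_⟩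
      rw [htx] at hj
      have : (σ ^ (j * (t x : ℤ))) (σ x) = σ ((σ ^ (j * (t x : ℤ))) x) := by
        rw [← Equiv.Perm.mul_apply, ← Equiv.Perm.mul_apply, ← zpow_one_add, ← zpow_add_one,
          add_comm]
      rw [this] at hj
      exact σ.injective hj
    · rintro ⟨j, rfl⟩
      refine ⟨j, ?_⟩
      rw [htx, ← Equiv.Perm.mul_apply, ← Equiv.Perm.mul_apply, ← zpow_one_add, ← zpow_add_one,
        add_comm]
  -- the setoid and its quotient
  set s : Setoid (Fin n) := ⟨r, hrrefl, hrsymm, hrtrans⟩ with hs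
  -- each class has cardinality b
  have hclass : ∀ x : Fin n, Nat.card {y : Fin n // r x y} = b := by
    intro x
    have hset : {y : Fin n | r x y} = MulAction.orbit (Subgroup.zpowers (σ ^ (t x))) x := by
      ext y
      simp only [Set.mem_setOf_eq, MulAction.mem_orbit_iff]
      constructor
      · rintro ⟨j, rfl⟩
        refine ⟨⟨(σ ^ (t x)) ^ j, Subgroup.mem_zpowers_iff.2 ⟨j, rfl⟩⟩, ?_⟩
        show ((σ ^ (t x)) ^ j) x = _
        rw [← zpow_natCast σ (t x), ← zpow_mul, mul_comm]
      · rintro ⟨⟨g, hg⟩, hgy⟩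
        obtain ⟨j, rfl⟩ := Subgroup.mem_zpowers_iff.1 hg
        refine ⟨j, ?_⟩
        rw [← hgy]
        show _ = ((σ ^ (t x)) ^ j) x
        rw [← zpow_natCast σ (t x), ← zpow_mul, mul_comm]
    have : Nat.card {y : Fin n // r x y} =
        Nat.card (MulAction.orbit (Subgroup.zpowers (σ ^ (t x))) x) := by
      rw [← hset]; rfl
    rw [this]
    haveI : Fintype (MulAction.orbit (Subgroup.zpowers (σ ^ (t x))) x) := Fintype.ofFinite _
    rw [Nat.card_eq_fintype_card, ← MulAction.minimalPeriod_eq_card (a := σ ^ (t x)) (b := x)]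
    -- show the minimal period of σ ^ t x at x is b
    set p : ℕ := Function.minimalPeriod ((σ ^ (t x)) • ·) x with hp
    have keyp : ∀ k : ℤ, ((σ ^ (t x)) ^ k) x = x ↔ (p : ℤ) ∣ k := by
      intro k
      exact MulAction.zpow_smul_eq_iff_minimalPeriod_dvd (a := σ ^ (t x)) (b := x) (n := k)
    have h1 : p ∣ b := by
      have : ((σ ^ (t x)) ^ (b : ℤ)) x = x := by
        rw [← zpow_natCast σ (t x), ← zpow_mul]
        refine (key x _).2 ?_
        have : (t x : ℤ) * b = (m x : ℤ) := by exact_mod_cast (mul_comm b (t x) ▸ hmt x)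
        rw [this]
      exact_mod_cast Int.ofNat_dvd.1 ((keyp b).1 this)
    have h2 : b ∣ p := by
      have hpx : ((σ ^ (t x)) ^ (p : ℤ)) x = x := (keyp p).2 dvd_rfl
      rw [← zpow_natCast σ (t x), ← zpow_mul] at hpx
      have := (key x _).1 hpx
      have hdvd2 : (m x : ℤ) ∣ (t x : ℤ) * p := this
      have hdvd3 : m x ∣ t x * p := by exact_mod_cast hdvd2
      rw [← hmt x] at hdvd3
      have : t x * b ∣ t x * p := by
        calc t x * b = b * t x := mul_comm _ _
        _ ∣ t x * p := hdvd3
      exact (Nat.mul_dvd_mul_iff_left (htpos x)).1 this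
    exact Nat.dvd_antisymm h1 h2
  -- cardinality of fibers of the quotient map
  have hfiber : ∀ q : Quotient s, Nat.card {y : Fin n // Quotient.mk s y = q} = b := by
    intro q
    induction q using Quotient.inductionOn with
    | h x =>
      have e : {y : Fin n // Quotient.mk s y = Quotient.mk s x} ≃ {y : Fin n // r x y} :=
        Equiv.subtypeEquivRight (fun y => by
          rw [Quotient.eq]
          exact ⟨fun h => hrsymm h, fun h => hrsymm h⟩)
      rw [Nat.card_congr e, hclass]
  haveI : Fintype (Quotient s) := Fintype.ofFinite _
  haveI : ∀ q : Quotient s, Fintype {y : Fin n // Quotient.mk s y = q} :=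
    fun q => Fintype.ofFinite _
  set N : ℕ := Fintype.card (Quotient s) with hN
  -- counting : N * b = n
  have hNb : N * b = n := by
    have e1 : (Σ q : Quotient s, {y : Fin n // Quotient.mk s y = q}) ≃ Fin n :=
      Equiv.sigmaFiberEquiv _
    have : Fintype.card (Σ q : Quotient s, {y : Fin n // Quotient.mk s y = q}) = n := by
      rw [Fintype.card_congr e1, Fintype.card_fin]
    rw [Fintype.card_sigma] at this
    have heach : ∀ q : Quotient s, Fintype.card {y : Fin n // Quotient.mk s y = q} = b := by
      intro q
      rw [← Nat.card_eq_fintype_card]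
      exact hfiber q
    rw [Finset.sum_congr rfl (fun q _ => heach q), Finset.sum_const, smul_eq_mul,
      Finset.card_univ] at this
    exact this
  -- build the conjugating permutation
  set eQ : Quotient s ≃ Fin N := Fintype.equivFinOfCardEq rfl with heQ
  have eF : ∀ q : Quotient s, {y : Fin n // Quotient.mk s y = q} ≃ Fin b := by
    intro q
    exact Fintype.equivFinOfCardEq (by rw [← Nat.card_eq_fintype_card]; exact hfiber q)
  set k : Equiv.Perm (Fin n) :=
    ((Equiv.sigmaFiberEquiv (fun y => Quotient.mk s y)).symm.trans
      ((Equiv.sigmaCongr eQ (fun q => eF q)).trans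
        ((Equiv.sigmaEquivProd (Fin N) (Fin b)).trans
          (finProdFinEquiv.trans (finCongr hNb))))) with hk
  -- the value of k, divided by b, is the class index
  have hkval : ∀ x : Fin n, (k x : ℕ) / b = (eQ (Quotient.mk s x) : ℕ) := by
    intro x
    have h1 : k x = finCongr hNb (finProdFinEquiv
        (eQ (Quotient.mk s x), eF (Quotient.mk s x) ⟨x, rfl⟩)) := by
      simp only [hk, Equiv.trans_apply, Equiv.sigmaCongr, Equiv.sigmaEquivProd,
        Equiv.coe_fn_mk, Sigma.map, finCongr_apply]
      rfl
    rw [h1]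
    have h2 : ((finCongr hNb (finProdFinEquiv
        (eQ (Quotient.mk s x), eF (Quotient.mk s x) ⟨x, rfl⟩))) : ℕ) =
        ((eF (Quotient.mk s x) ⟨x, rfl⟩ : ℕ) + b * (eQ (Quotient.mk s x) : ℕ)) := by
      simp
    rw [h2, Nat.add_mul_div_left _ _ hb0,
      Nat.div_eq_of_lt (eF (Quotient.mk s x) ⟨x, rfl⟩).isLt, Nat.zero_add]
  refine ⟨k, ?_⟩
  show ∀ a c : Fin n, ((k * σ * k⁻¹) a : ℕ) / b = ((k * σ * k⁻¹) c : ℕ) / b ↔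
    (a : ℕ) / b = (c : ℕ) / b
  intro a c
  have hac : ∀ z : Fin n, ((k * σ * k⁻¹) z : ℕ) / b = (eQ (Quotient.mk s (σ (k⁻¹ z))) : ℕ) := by
    intro z
    rw [Equiv.Perm.mul_apply, Equiv.Perm.mul_apply, hkval]
  have hz : ∀ z : Fin n, (z : ℕ) / b = (eQ (Quotient.mk s (k⁻¹ z)) : ℕ) := by
    intro z
    conv_lhs => rw [← (show k (k⁻¹ z) = z from Equiv.apply_symm_apply k z)]
    rw [hkval]
  rw [hac a, hac c, hz a, hz c]
  constructor
  · intro h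
    have h' : Quotient.mk s (σ (k⁻¹ a)) = Quotient.mk s (σ (k⁻¹ c)) := by
      have := eQ.injective (Fin.val_injective h)
      exact this
    have hrel : r (σ (k⁻¹ a)) (σ (k⁻¹ c)) := Quotient.eq.1 h'
    have : r (k⁻¹ a) (k⁻¹ c) := (hrinv _ _).1 hrel
    have : Quotient.mk s (k⁻¹ a) = Quotient.mk s (k⁻¹ c) := Quotient.eq.2 this
    rw [this]
  · intro h
    have h' : Quotient.mk s (k⁻¹ a) = Quotient.mk s (k⁻¹ c) := by
      have := eQ.injective (Fin.val_injective h)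
      exact this
    have hrel : r (k⁻¹ a) (k⁻¹ c) := Quotient.eq.1 h'
    have : r (σ (k⁻¹ a)) (σ (k⁻¹ c)) := (hrinv _ _).2 hrel
    have : Quotient.mk s (σ (k⁻¹ a)) = Quotient.mk s (σ (k⁻¹ c)) := Quotient.eq.2 this
    rw [this]
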